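/- Strong duality for restricted tester discrimination: let C ⊆ Pos^M be a closed convex cone and S a compact convex subset of positive semidefinite matrices, with feasible set P' = {Φ ∈ C : Σₘ Φₘ ∈ S} nonempty. Then the maximum over Φ ∈ P' of Σₘ ⟨Φₘ, Ẽₘ⟩ equals the infimum over all Hermitian χ satisfying Σₘ ⟨Φₘ, χ − Ẽₘ⟩ ≥ 0 for all Φ ∈ C of D_S(χ) := max_{φ∈S} ⟨φ, χ⟩. -/

import Mathlib

open Matrix
open scoped ComplexOrder

namespace SDAux

variable {n : ℕ}

instance sdLocallyConvex (n : ℕ) : LocallyConvexSpace ℝ (Matrix (Fin n) (Fin n) ℂ) :=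
  inferInstanceAs (LocallyConvexSpace ℝ (Fin n → Fin n → ℂ))

instance sdFirstCountable (n : ℕ) : FirstCountableTopology (Matrix (Fin n) (Fin n) ℂ) :=
  inferInstanceAs (FirstCountableTopology (Fin n → Fin n → ℂ))

noncomputable def ip (A B : Matrix (Fin n) (Fin n) ℂ) : ℝ := ((A * B).trace).re

lemma ip_expand (A B : Matrix (Fin n) (Fin n) ℂ) :
    ip A B = ∑ i, ∑ j, ((A i j) * (B j i)).re := by
  simp [ip, Matrix.trace, Matrix.diag, Matrix.mul_apply, Complex.re_sum]

lemma ip_add_left (A A' B : Matrix (Fin n) (Fin n) ℂ) :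
    ip (A + A') B = ip A B + ip A' B := by
  simp [ip, add_mul]

lemma ip_smul_left (c : ℝ) (A B : Matrix (Fin n) (Fin n) ℂ) :
    ip (c • A) B = c * ip A B := by
  simp [ip, Matrix.smul_mul, Complex.smul_re]

lemma ip_zero_left (B : Matrix (Fin n) (Fin n) ℂ) : ip 0 B = 0 := by
  simp [ip]

lemma ip_sub_left (A A' B : Matrix (Fin n) (Fin n) ℂ) :
    ip (A - A') B = ip A B - ip A' B := by
  simp [ip, sub_mul]

lemma ip_sum_left {ι : Type*} (s : Finset ι) (f : ι → Matrix (Fin n) (Fin n) ℂ)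
    (B : Matrix (Fin n) (Fin n) ℂ) :
    ip (∑ m ∈ s, f m) B = ∑ m ∈ s, ip (f m) B := by
  simp [ip, Finset.sum_mul, Matrix.trace_sum, Complex.re_sum]

lemma ip_add_right (A B B' : Matrix (Fin n) (Fin n) ℂ) :
    ip A (B + B') = ip A B + ip A B' := by
  simp [ip, mul_add]

lemma ip_smul_right (c : ℝ) (A B : Matrix (Fin n) (Fin n) ℂ) :
    ip A (c • B) = c * ip A B := by
  simp [ip, Matrix.mul_smul, Complex.smul_re]

lemma ip_sub_right (A B B' : Matrix (Fin n) (Fin n) ℂ) :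
    ip A (B - B') = ip A B - ip A B' := by
  simp [ip, mul_sub]

lemma continuous_ip_left (B : Matrix (Fin n) (Fin n) ℂ) :
    Continuous fun A : Matrix (Fin n) (Fin n) ℂ => ip A B := by
  simp only [ip_expand]
  refine continuous_finset_sum _ fun i _ => continuous_finset_sum _ fun j _ => ?_
  exact Complex.continuous_re.comp ((continuous_apply_apply i j).mul continuous_const)

lemma helper (z : ℂ) (c1 c2 : ℝ) :
    (z * ((c1:ℂ) - Complex.I * c2)).re = c1 * z.re + c2 * z.im := by
  simp [Complex.mul_re, Complex.mul_im, Complex.sub_re, Complex.sub_im]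
  ring

/-- every real-linear functional on complex matrices is `A ↦ Re tr (A Y)` for some `Y`. -/
lemma exists_repr (g : Matrix (Fin n) (Fin n) ℂ →ₗ[ℝ] ℝ) :
    ∃ Y : Matrix (Fin n) (Fin n) ℂ, ∀ x, ip x Y = g x := by
  classical
  refine ⟨Matrix.of fun p q =>
    (g (single q p 1) : ℂ) - Complex.I * (g (single q p Complex.I)), fun x => ?_⟩
  have hx : x = ∑ a : Fin n, ∑ b : Fin n,
      ((x a b).re • single a b (1:ℂ) + (x a b).im • single a b Complex.I) := by
    conv_lhs => rw [matrix_eq_sum_single x]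
    refine Finset.sum_congr rfl fun a _ => Finset.sum_congr rfl fun b _ => ?_
    rw [smul_single, smul_single, ← single_add]
    simp [Complex.real_smul]
  rw [ip_expand]
  conv_rhs => rw [hx]
  rw [map_sum]
  refine Finset.sum_congr rfl fun i _ => ?_
  rw [map_sum]
  refine Finset.sum_congr rfl fun j _ => ?_
  simp only [Matrix.of_apply, map_add, _root_.map_smul, smul_eq_mul, helper]
  ring

lemma ip_conjTranspose {x Y : Matrix (Fin n) (Fin n) ℂ} (hx : x.IsHermitian) :
    ip x Yᴴ = ip x Y := by
  have h1 : (x * Yᴴ).trace = star ((x * Y).trace) := by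
    have h2 : x * Yᴴ = (Y * xᴴ)ᴴ := by
      rw [Matrix.conjTranspose_mul, Matrix.conjTranspose_conjTranspose]
    rw [h2, Matrix.trace_conjTranspose, hx.eq, Matrix.trace_mul_comm]
  simp [ip, h1]

lemma hermitian_real_smul (r : ℝ) {A : Matrix (Fin n) (Fin n) ℂ} (hA : A.IsHermitian) :
    (r • A).IsHermitian := by
  unfold Matrix.IsHermitian
  ext i j
  rw [Matrix.conjTranspose_apply]
  rw [Matrix.smul_apply, Matrix.smul_apply, star_smul, star_trivial, ← hA.apply i j]

lemma hermitian_half_add (Y : Matrix (Fin n) (Fin n) ℂ) :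
    ((2⁻¹ : ℝ) • (Y + Yᴴ)).IsHermitian := by
  apply hermitian_real_smul
  unfold Matrix.IsHermitian
  rw [Matrix.conjTranspose_add, Matrix.conjTranspose_conjTranspose, add_comm]

lemma hermitian_sum {ι : Type*} (s : Finset ι) (f : ι → Matrix (Fin n) (Fin n) ℂ)
    (hf : ∀ m ∈ s, (f m).IsHermitian) : (∑ m ∈ s, f m).IsHermitian := by
  unfold Matrix.IsHermitian
  rw [Matrix.conjTranspose_sum]
  exact Finset.sum_congr rfl fun m hm => (hf m hm).eq

lemma diag_sq (B : Matrix (Fin n) (Fin n) ℂ) (i : Fin n) :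
    ((Bᴴ * B) i i).re = ∑ k, ‖B k i‖ ^ 2 := by
  simp [Matrix.mul_apply, Matrix.conjTranspose_apply, Complex.re_sum]
  refine Finset.sum_congr rfl fun k _ => ?_
  rw [← Complex.normSq_eq_norm_sq]
  simp [Complex.normSq_apply]

open scoped MatrixOrder in
lemma psd_exists_aux {A : Matrix (Fin n) (Fin n) ℂ} (hA : A.PosSemidef) :
    ∃ B : Matrix (Fin n) (Fin n) ℂ, A = Bᴴ * B := by
  classical
  obtain ⟨B, hB⟩ := CStarAlgebra.nonneg_iff_eq_star_mul_self.mp hA.nonneg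
  exact ⟨B, hB⟩

lemma psd_trace_re_nonneg {A : Matrix (Fin n) (Fin n) ℂ} (hA : A.PosSemidef) :
    0 ≤ A.trace.re := by
  obtain ⟨B, rfl⟩ := psd_exists_aux hA
  have hTr : (Bᴴ * B).trace.re = ∑ k, ((Bᴴ * B) k k).re := by
    simp [Matrix.trace, Matrix.diag, Complex.re_sum]
  rw [hTr]
  refine Finset.sum_nonneg fun k _ => ?_
  rw [diag_sq]
  positivity

lemma psd_entry_le_trace {A : Matrix (Fin n) (Fin n) ℂ} (hA : A.PosSemidef) (i j : Fin n) :
    ‖A i j‖ ≤ A.trace.re := by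
  obtain ⟨B, rfl⟩ := psd_exists_aux hA
  set A := Bᴴ * B with hAdef
  have hdiag : ∀ k, (A k k).re = ∑ l, ‖B l k‖ ^ 2 := fun k => diag_sq B k
  have hdiag_nonneg : ∀ k, 0 ≤ (A k k).re := fun k => by
    rw [hdiag k]; positivity
  have hTr : A.trace.re = ∑ k, (A k k).re := by
    simp [Matrix.trace, Matrix.diag, Complex.re_sum]
  have hTr_nonneg : 0 ≤ A.trace.re := by
    rw [hTr]; exact Finset.sum_nonneg fun k _ => hdiag_nonneg k
  have hle : ∀ k, (A k k).re ≤ A.trace.re := fun k => by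
    rw [hTr]
    exact Finset.single_le_sum (fun l _ => hdiag_nonneg l) (Finset.mem_univ k)
  have h1 : ‖A i j‖ ≤ ∑ k, ‖B k i‖ * ‖B k j‖ := by
    have h0 : A i j = ∑ k, star (B k i) * B k j := by
      simp [hAdef, Matrix.mul_apply, Matrix.conjTranspose_apply]
    rw [h0]
    refine (norm_sum_le _ _).trans_eq ?_
    refine Finset.sum_congr rfl fun k _ => ?_
    simp [_root_.map_mul]
  have h2 : (∑ k, ‖B k i‖ * ‖B k j‖) ^ 2
      ≤ (∑ k, ‖B k i‖ ^ 2) * (∑ k, ‖B k j‖ ^ 2) :=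
    Finset.sum_mul_sq_le_sq_mul_sq _ _ _
  have h3 : (‖A i j‖) ^ 2 ≤ A.trace.re * A.trace.re := by
    calc (‖A i j‖) ^ 2
        ≤ (∑ k, ‖B k i‖ * ‖B k j‖) ^ 2 := by
          apply pow_le_pow_left₀ (norm_nonneg _) h1
      _ ≤ (∑ k, ‖B k i‖ ^ 2) * (∑ k, ‖B k j‖ ^ 2) := h2
      _ = (A i i).re * (A j j).re := by rw [hdiag i, hdiag j]
      _ ≤ A.trace.re * A.trace.re :=
          mul_le_mul (hle i) (hle j) (hdiag_nonneg j) hTr_nonneg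
  nlinarith [norm_nonneg (A i j)]

lemma box_compact (B : ℝ) :
    IsCompact {A : Matrix (Fin n) (Fin n) ℂ | ∀ i j, ‖A i j‖ ≤ B} := by
  show @IsCompact (Fin n → Fin n → ℂ) _ {A | ∀ i j, ‖A i j‖ ≤ B}
  have h : IsCompact
      (Set.univ.pi fun _ : Fin n => (Set.univ.pi fun _ : Fin n => Metric.closedBall (0:ℂ) B)) :=
    isCompact_univ_pi fun _ => isCompact_univ_pi fun _ => isCompact_closedBall 0 B
  convert h using 1
  ext A
  constructor
  · intro hA i _ j _
    simpa [Complex.dist_eq] using hA i j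
  · intro hA i j
    have := hA i (Set.mem_univ i) j (Set.mem_univ j)
    simpa [Complex.dist_eq] using this

lemma boxM_compact {M : ℕ} (B : ℝ) :
    IsCompact {Ψ : Fin M → Matrix (Fin n) (Fin n) ℂ | ∀ m i j, ‖Ψ m i j‖ ≤ B} := by
  have h : IsCompact (Set.univ.pi fun _ : Fin M =>
      {A : Matrix (Fin n) (Fin n) ℂ | ∀ i j, ‖A i j‖ ≤ B}) :=
    isCompact_univ_pi fun _ => box_compact B
  convert h using 1
  ext Ψ
  simp [Set.mem_pi]

end SDAux

open SDAux

/-- Strong duality for restricted tester discrimination. `C ⊆ Pos_n^M` is a closed convex cone,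
`S ⊆ Pos_n` a compact convex set, with the feasible set `{Φ ∈ C : Σₘ Φₘ ∈ S}` nonempty and
bounded. Then the supremum of `Σₘ ⟨Φₘ, Ẽₘ⟩` over the feasible set equals the infimum of
`D_S(χ) = sup_{φ∈S} ⟨φ, χ⟩` over all Hermitian `χ` with `Σₘ ⟨Φₘ, χ − Ẽₘ⟩ ≥ 0` for all `Φ ∈ C`. -/
theorem stmt_3 {n M : ℕ}
    (Etil : Fin M → Matrix (Fin n) (Fin n) ℂ) (hE : ∀ m, (Etil m).PosSemidef)
    (C : Set (Fin M → Matrix (Fin n) (Fin n) ℂ))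
    (hCpos : ∀ Φ ∈ C, ∀ m, (Φ m).PosSemidef)
    (hCclosed : IsClosed C) (hCconv : Convex ℝ C)
    (hCcone : ∀ Φ ∈ C, ∀ c : ℝ, 0 ≤ c → (fun m => (c : ℂ) • Φ m) ∈ C)
    (S : Set (Matrix (Fin n) (Fin n) ℂ))
    (hSpos : ∀ φ ∈ S, φ.PosSemidef) (hScompact : IsCompact S) (hSconv : Convex ℝ S)
    (hfeas_ne : {Φ | Φ ∈ C ∧ (∑ m, Φ m) ∈ S}.Nonempty)
    (hfeas_bdd : ∃ R : ℝ, ∀ Φ ∈ {Φ | Φ ∈ C ∧ (∑ m, Φ m) ∈ S},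
      ∀ m i j, ‖Φ m i j‖ ≤ R) :
    sSup {r : ℝ | ∃ Φ, Φ ∈ C ∧ (∑ m, Φ m) ∈ S ∧
        r = ∑ m, ((Φ m * Etil m).trace).re}
      = sInf {r : ℝ | ∃ χ : Matrix (Fin n) (Fin n) ℂ, χ.IsHermitian ∧
          (∀ Φ ∈ C, 0 ≤ ∑ m, ((Φ m * (χ - Etil m)).trace).re) ∧
          r = sSup {t : ℝ | ∃ φ ∈ S, t = ((φ * χ).trace).re}} := by
  classical
  obtain ⟨Φ₀, hΦ₀C, hΦ₀S⟩ := hfeas_ne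
  set P : Set ℝ := {r | ∃ Φ, Φ ∈ C ∧ (∑ m, Φ m) ∈ S ∧ r = ∑ m, ip (Φ m) (Etil m)} with hPdef
  set D : Set ℝ := {r | ∃ χ : Matrix (Fin n) (Fin n) ℂ, χ.IsHermitian ∧
      (∀ Φ ∈ C, 0 ≤ ∑ m, ip (Φ m) (χ - Etil m)) ∧
      r = sSup {t : ℝ | ∃ φ ∈ S, t = ip φ χ}} with hDdef
  show sSup P = sInf D
  -- basic facts
  have hPne : P.Nonempty := ⟨_, Φ₀, hΦ₀C, hΦ₀S, rfl⟩
  have hPbdd : BddAbove P := by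
    obtain ⟨R, hR⟩ := hfeas_bdd
    refine ⟨∑ m, ∑ i, ∑ j, R * ‖Etil m j i‖, ?_⟩
    rintro r ⟨Φ, hΦC, hΦS, rfl⟩
    refine Finset.sum_le_sum fun m _ => ?_
    rw [ip_expand]
    refine Finset.sum_le_sum fun i _ => Finset.sum_le_sum fun j _ => ?_
    calc ((Φ m i j) * (Etil m j i)).re ≤ ‖(Φ m i j) * (Etil m j i)‖ :=
          Complex.re_le_norm _
      _ = ‖Φ m i j‖ * ‖Etil m j i‖ := by
          simp [_root_.map_mul]
      _ ≤ R * ‖Etil m j i‖ :=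
          mul_le_mul_of_nonneg_right (hR Φ ⟨hΦC, hΦS⟩ m i j) (norm_nonneg _)
  have hC0 : (0 : Fin M → Matrix (Fin n) (Fin n) ℂ) ∈ C := by
    have h := hCcone Φ₀ hΦ₀C 0 le_rfl
    have h2 : (fun m => ((0:ℝ) : ℂ) • Φ₀ m) = (0 : Fin M → Matrix (Fin n) (Fin n) ℂ) := by
      funext m; simp
    rwa [h2] at h
  have hsmulC : ∀ Φ ∈ C, ∀ c : ℝ, 0 ≤ c → c • Φ ∈ C := by
    intro Φ hΦ c hc
    have h := hCcone Φ hΦ c hc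
    have h2 : (fun m => ((c:ℝ) : ℂ) • Φ m) = c • Φ := by
      funext m; ext i j; simp [Complex.real_smul]
    rwa [h2] at h
  -- weak duality
  have hweak : ∀ r ∈ P, ∀ d ∈ D, r ≤ d := by
    rintro r ⟨Φ, hΦC, hΦS, rfl⟩ d ⟨χ, hχH, hχfeas, rfl⟩
    have himg : {t : ℝ | ∃ φ ∈ S, t = ip φ χ} = (fun φ => ip φ χ) '' S := by
      ext t
      constructor
      · rintro ⟨φ, hφ, rfl⟩; exact ⟨φ, hφ, rfl⟩
      · rintro ⟨φ, hφ, rfl⟩; exact ⟨φ, hφ, rfl⟩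
    have hbdd : BddAbove {t : ℝ | ∃ φ ∈ S, t = ip φ χ} := by
      rw [himg]
      exact (hScompact.image (continuous_ip_left χ)).bddAbove
    have hle1 : ∑ m, ip (Φ m) (Etil m) ≤ ∑ m, ip (Φ m) χ := by
      have h := hχfeas Φ hΦC
      have h2 : ∑ m, ip (Φ m) (χ - Etil m) = ∑ m, ip (Φ m) χ - ∑ m, ip (Φ m) (Etil m) := by
        rw [← Finset.sum_sub_distrib]
        exact Finset.sum_congr rfl fun m _ => ip_sub_right _ _ _
      linarith [h2 ▸ h]
    have hle2 : ∑ m, ip (Φ m) χ = ip (∑ m, Φ m) χ := (ip_sum_left _ _ _).symm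
    have hmem : ip (∑ m, Φ m) χ ∈ {t : ℝ | ∃ φ ∈ S, t = ip φ χ} := ⟨_, hΦS, rfl⟩
    calc ∑ m, ip (Φ m) (Etil m) ≤ ip (∑ m, Φ m) χ := by rw [← hle2]; exact hle1
      _ ≤ sSup {t : ℝ | ∃ φ ∈ S, t = ip φ χ} := le_csSup hbdd hmem
  -- strong duality: approximate dual solutions
  have key : ∀ ε : ℝ, 0 < ε → ∃ d ∈ D, d ≤ sSup P + ε := by
    intro ε hε
    set p := sSup P with hp
    -- the auxiliary convex set
    set A : Set (Matrix (Fin n) (Fin n) ℂ × ℝ) :=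
      {z | ∃ Φ ∈ C, ∃ σ ∈ S, z.1 = (∑ m, Φ m) - σ ∧ z.2 ≤ ∑ m, ip (Φ m) (Etil m)} with hAdef
    have hAconv : Convex ℝ A := by
      rintro ⟨x₁, t₁⟩ ⟨Φ₁, hΦ₁, σ₁, hσ₁, hx₁, ht₁⟩ ⟨x₂, t₂⟩ ⟨Φ₂, hΦ₂, σ₂, hσ₂, hx₂, ht₂⟩
        a b ha hb hab
    
      refine ⟨a • Φ₁ + b • Φ₂, hCconv hΦ₁ hΦ₂ ha hb hab,
        a • σ₁ + b • σ₂, hSconv hσ₁ hσ₂ ha hb hab, ?_, ?_⟩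
      · show a • x₁ + b • x₂ = _
        have hx₁' : x₁ = (∑ m, Φ₁ m) - σ₁ := hx₁
        have hx₂' : x₂ = (∑ m, Φ₂ m) - σ₂ := hx₂
        rw [hx₁', hx₂']
        have hsum : ∑ m, (a • Φ₁ + b • Φ₂) m = a • ∑ m, Φ₁ m + b • ∑ m, Φ₂ m := by
          simp only [Pi.add_apply, Pi.smul_apply, Finset.sum_add_distrib, Finset.smul_sum]
        rw [hsum]
        module
      · show a * t₁ + b * t₂ ≤ _
        have hsum : ∑ m, ip ((a • Φ₁ + b • Φ₂) m) (Etil m)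
            = a * ∑ m, ip (Φ₁ m) (Etil m) + b * ∑ m, ip (Φ₂ m) (Etil m) := by
          rw [Finset.mul_sum, Finset.mul_sum, ← Finset.sum_add_distrib]
          refine Finset.sum_congr rfl fun m _ => ?_
          simp only [Pi.add_apply, Pi.smul_apply]
          rw [ip_add_left, ip_smul_left, ip_smul_left]
        rw [hsum]
        exact add_le_add (mul_le_mul_of_nonneg_left ht₁ ha) (mul_le_mul_of_nonneg_left ht₂ hb)
    -- the point to separate
    have hpnot : ((0 : Matrix (Fin n) (Fin n) ℂ), p + ε) ∉ closure A := by
      intro hcl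
      rw [mem_closure_iff_seq_limit] at hcl
      obtain ⟨z, hzA, hzlim⟩ := hcl
      choose Φs hΦsC σs hσsS hz1 hz2 using hzA
      have htr_cont : Continuous fun x : Matrix (Fin n) (Fin n) ℂ => (x.trace).re :=
        Complex.continuous_re.comp (continuous_id.matrix_trace)
      obtain ⟨B₀, hB₀⟩ := (hScompact.image htr_cont).bddAbove
      have hB₀' : ∀ σ ∈ S, (σ.trace).re ≤ B₀ := fun σ hσ => hB₀ (Set.mem_image_of_mem _ hσ)
      have hz1lim : Filter.Tendsto (fun k => (z k).1) Filter.atTop (nhds 0) :=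
        (continuous_fst.tendsto _).comp hzlim
      have hz2lim : Filter.Tendsto (fun k => (z k).2) Filter.atTop (nhds (p + ε)) :=
        (continuous_snd.tendsto _).comp hzlim
      have hτ : Filter.Tendsto (fun k => (((z k).1).trace).re) Filter.atTop (nhds 0) := by
        have h := (htr_cont.tendsto 0).comp hz1lim
        simpa [Function.comp_def] using h
      have hev : ∀ᶠ k in Filter.atTop, (((z k).1).trace).re < 1 :=
        hτ (Iio_mem_nhds (by norm_num : (0:ℝ) < 1))
      obtain ⟨K, hK⟩ := Filter.eventually_atTop.mp hev
      set B := B₀ + 1 with hBdef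
      set Kbox : Set (Fin M → Matrix (Fin n) (Fin n) ℂ) :=
        {Ψ | ∀ m i j, ‖Ψ m i j‖ ≤ B} with hKboxdef
      have hKboxc : IsCompact Kbox := boxM_compact B
      have hbound : ∀ k, K ≤ k → Φs k ∈ Kbox := by
        intro k hk m i j
        have hpsd : ∀ m', (Φs k m').PosSemidef := fun m' => hCpos _ (hΦsC k) m'
        have h1 : ‖Φs k m i j‖ ≤ ((Φs k m).trace).re :=
          psd_entry_le_trace (hpsd m) i j
        have h2 : ((Φs k m).trace).re ≤ ((∑ m', Φs k m').trace).re := by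
          rw [Matrix.trace_sum, Complex.re_sum]
          exact Finset.single_le_sum (fun m' _ => psd_trace_re_nonneg (hpsd m'))
            (Finset.mem_univ m)
        have h3 : ((∑ m', Φs k m').trace).re = (((z k).1).trace).re + ((σs k).trace).re := by
          rw [hz1 k, Matrix.trace_sub, Complex.sub_re]
          ring
        have h4 : (((z k).1).trace).re < 1 := hK k hk
        have h5 : ((σs k).trace).re ≤ B₀ := hB₀' _ (hσsS k)
        calc ‖Φs k m i j‖ ≤ ((Φs k m).trace).re := h1
          _ ≤ ((∑ m', Φs k m').trace).re := h2
          _ = (((z k).1).trace).re + ((σs k).trace).re := h3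
          _ ≤ B₀ + 1 := by linarith
      have hKc : IsCompact ((C ∩ Kbox) ×ˢ S) :=
        (hKboxc.of_isClosed_subset (hCclosed.inter hKboxc.isClosed)
          Set.inter_subset_right).prod hScompact
      set w : ℕ → (Fin M → Matrix (Fin n) (Fin n) ℂ) × Matrix (Fin n) (Fin n) ℂ :=
        fun k => (Φs (k + K), σs (k + K)) with hwdef
      have hw : ∀ k, w k ∈ (C ∩ Kbox) ×ˢ S := fun k =>
        ⟨⟨hΦsC _, hbound _ (Nat.le_add_left K k)⟩, hσsS _⟩
      obtain ⟨⟨Φl, σl⟩, hmem, φi, hφmono, hφlim⟩ := hKc.tendsto_subseq hw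
      set T : ℕ → ℕ := fun k => φi k + K with hTdef
      have hT : Filter.Tendsto T Filter.atTop Filter.atTop := by
        apply Filter.tendsto_atTop_mono (fun k => ?_) Filter.tendsto_id
        calc (id k : ℕ) ≤ φi k := hφmono.le_apply
          _ ≤ φi k + K := Nat.le_add_right _ _
      have hΦlim : Filter.Tendsto (fun k => Φs (T k)) Filter.atTop (nhds Φl) :=
        (continuous_fst.tendsto _).comp hφlim
      have hσlim : Filter.Tendsto (fun k => σs (T k)) Filter.atTop (nhds σl) :=
        (continuous_snd.tendsto _).comp hφlim
      have hsum_cont : Continuous fun Ψ : Fin M → Matrix (Fin n) (Fin n) ℂ => ∑ m, Ψ m :=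
        continuous_finset_sum _ fun m _ => continuous_apply m
      have q1 : Filter.Tendsto (fun k => (∑ m, Φs (T k) m) - σs (T k)) Filter.atTop
          (nhds ((∑ m, Φl m) - σl)) :=
        (((hsum_cont.tendsto _).comp hΦlim).sub hσlim)
      have q2 : Filter.Tendsto (fun k => (∑ m, Φs (T k) m) - σs (T k)) Filter.atTop (nhds 0) := by
        exact (hz1lim.comp hT).congr fun k => hz1 (T k)
      have hSig : (∑ m, Φl m) - σl = 0 := tendsto_nhds_unique q1 q2
      have hfeasl : (∑ m, Φl m) ∈ S := by
        rw [sub_eq_zero] at hSig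
        rw [hSig]
        exact hmem.2
      have hCl : Φl ∈ C := hmem.1.1
      have hipE_cont : Continuous fun Ψ : Fin M → Matrix (Fin n) (Fin n) ℂ =>
          ∑ m, ip (Ψ m) (Etil m) :=
        continuous_finset_sum _ fun m _ => (continuous_ip_left (Etil m)).comp (continuous_apply m)
      have v1 : Filter.Tendsto (fun k => ∑ m, ip (Φs (T k) m) (Etil m)) Filter.atTop
          (nhds (∑ m, ip (Φl m) (Etil m))) :=
        (hipE_cont.tendsto _).comp hΦlim
      have v2 : Filter.Tendsto (fun k => (z (T k)).2) Filter.atTop (nhds (p + ε)) :=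
        hz2lim.comp hT
      have hple : p + ε ≤ ∑ m, ip (Φl m) (Etil m) :=
        le_of_tendsto_of_tendsto' v2 v1 fun k => hz2 (T k)
      have hmemP : (∑ m, ip (Φl m) (Etil m)) ∈ P := ⟨Φl, hCl, hfeasl, rfl⟩
      have : ∑ m, ip (Φl m) (Etil m) ≤ p := le_csSup hPbdd hmemP
      linarith
    -- separation
    obtain ⟨f, u, hfu, hA_gt⟩ :=
      geometric_hahn_banach_point_closed (hAconv.closure) isClosed_closure hpnot
    have hA_gt' : ∀ z ∈ A, u < f z := fun z hz => hA_gt z (subset_closure hz)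
    set s := f ((0 : Matrix (Fin n) (Fin n) ℂ), (1:ℝ)) with hsdef
    have fsplit : ∀ (x : Matrix (Fin n) (Fin n) ℂ) (t : ℝ),
        f (x, t) = f (x, 0) + t * s := by
      intro x t
      have h : (x, t) = (x, (0:ℝ)) + t • ((0 : Matrix (Fin n) (Fin n) ℂ), (1:ℝ)) := by
        ext
        · simp
        · simp
      rw [h, map_add, f.map_smul, smul_eq_mul]
    -- representation of the functional on matrices
    obtain ⟨Y, hY⟩ := exists_repr
      ((f.toLinearMap).comp (LinearMap.inl ℝ (Matrix (Fin n) (Fin n) ℂ) ℝ))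
    have hY' : ∀ x, ip x Y = f (x, 0) := fun x => hY x
    set χ₀ := (2⁻¹ : ℝ) • (Y + Yᴴ) with hχ₀def
    have hχ₀H : χ₀.IsHermitian := hermitian_half_add Y
    have hipχ₀ : ∀ x : Matrix (Fin n) (Fin n) ℂ, x.IsHermitian → ip x χ₀ = f (x, 0) := by
      intro x hx
      rw [hχ₀def, ip_smul_right, ip_add_right, ip_conjTranspose hx, hY' x]
      ring
    have hherm : ∀ Φ ∈ C, ∀ σ ∈ S, ((∑ m, Φ m) - σ).IsHermitian := by
      intro Φ hΦ σ hσ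
      exact (hermitian_sum _ _ fun m _ => (hCpos Φ hΦ m).1).sub (hSpos σ hσ).1
    have hstar : ∀ Φ ∈ C, ∀ σ ∈ S,
        u < ip ((∑ m, Φ m) - σ) χ₀ + (∑ m, ip (Φ m) (Etil m)) * s := by
      intro Φ hΦ σ hσ
      have hz : (((∑ m, Φ m) - σ), ∑ m, ip (Φ m) (Etil m)) ∈ A :=
        ⟨Φ, hΦ, σ, hσ, rfl, le_rfl⟩
      have h := hA_gt' _ hz
      rwa [fsplit, ← hipχ₀ _ (hherm Φ hΦ σ hσ)] at h
    have hstar2 : ∀ Φ ∈ C, ∀ σ ∈ S,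
        u < ip (∑ m, Φ m) χ₀ - ip σ χ₀ + (∑ m, ip (Φ m) (Etil m)) * s := by
      intro Φ hΦ σ hσ
      have h := hstar Φ hΦ σ hσ
      rwa [ip_sub_left] at h
    have hfpoint : (p + ε) * s < u := by
      have h := hfu
      rw [show ((0 : Matrix (Fin n) (Fin n) ℂ), p + ε)
          = ((0 : Matrix (Fin n) (Fin n) ℂ), (p + ε : ℝ)) from rfl, fsplit] at h
      have h0 : f ((0 : Matrix (Fin n) (Fin n) ℂ), (0:ℝ)) = 0 := by
        have : ((0 : Matrix (Fin n) (Fin n) ℂ), (0:ℝ))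
            = (0 : Matrix (Fin n) (Fin n) ℂ × ℝ) := rfl
        rw [this, map_zero]
      rw [h0] at h
      linarith
    set σ₀ := ∑ m, Φ₀ m with hσ₀def
    have hσ₀S : σ₀ ∈ S := hΦ₀S
    -- trivial observations with Φ = 0
    have hzero_sum : (∑ m, (0 : Fin M → Matrix (Fin n) (Fin n) ℂ) m)
        = (0 : Matrix (Fin n) (Fin n) ℂ) := by simp
    have hzero_val : (∑ m, ip ((0 : Fin M → Matrix (Fin n) (Fin n) ℂ) m) (Etil m)) = 0 := by
      simp [ip_zero_left]
    have hzeroS : ∀ σ ∈ S, u < - ip σ χ₀ := by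
      intro σ hσ
      have h := hstar2 0 hC0 σ hσ
      rw [hzero_sum, hzero_val, ip_zero_left] at h
      linarith
    -- the multiplier s is negative
    have hs_neg : s < 0 := by
      rcases lt_trichotomy s 0 with h | h | h
      · exact h
      · exfalso
        have h1 := hstar Φ₀ hΦ₀C σ₀ hσ₀S
        rw [hσ₀def, sub_self, ip_zero_left, h, mul_zero] at h1
        have h2 := hfpoint
        rw [h, mul_zero] at h2
        linarith
      · exfalso
        set t0 := min (∑ m, ip (Φ₀ m) (Etil m)) ((u - 1) / s) with ht0def
        have hz : (((∑ m, Φ₀ m) - σ₀), t0) ∈ A :=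
          ⟨Φ₀, hΦ₀C, σ₀, hσ₀S, rfl, min_le_left _ _⟩
        have h1 := hA_gt' _ hz
        rw [fsplit, ← hipχ₀ _ (hherm Φ₀ hΦ₀C σ₀ hσ₀S), hσ₀def, sub_self, ip_zero_left] at h1
        have h2 : t0 * s ≤ ((u - 1) / s) * s :=
          mul_le_mul_of_nonneg_right (min_le_right _ _) (le_of_lt h)
        rw [div_mul_cancel₀ _ (ne_of_gt h)] at h2
        linarith
    have hsinv : 0 < (-s)⁻¹ := inv_pos.mpr (by linarith)
    have hsne : s ≠ 0 := ne_of_lt hs_neg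
    set χ := (-s)⁻¹ • χ₀ with hχdef
    have hχH : χ.IsHermitian := hermitian_real_smul _ hχ₀H
    -- dual feasibility
    have hdual : ∀ Φ ∈ C, 0 ≤ ∑ m, ip (Φ m) (χ - Etil m) := by
      intro Φ hΦ
      have hδ : 0 ≤ ip (∑ m, Φ m) χ₀ + (∑ m, ip (Φ m) (Etil m)) * s := by
        by_contra hneg
        push_neg at hneg
        set δ := ip (∑ m, Φ m) χ₀ + (∑ m, ip (Φ m) (Etil m)) * s with hδdef
        have hu0 : u + ip σ₀ χ₀ < 0 := by
          have := hzeroS σ₀ hσ₀S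
          linarith
        set c := (u + ip σ₀ χ₀) / δ with hcdef
        have hc : 0 < c := div_pos_iff.mpr (Or.inr ⟨hu0, hneg⟩)
        have hcC := hsmulC Φ hΦ c hc.le
        have h := hstar2 (c • Φ) hcC σ₀ hσ₀S
        have e1 : ∑ m, (c • Φ) m = c • ∑ m, Φ m := by
          simp [Finset.smul_sum]
        have e2 : ip (c • ∑ m, Φ m) χ₀ = c * ip (∑ m, Φ m) χ₀ := ip_smul_left _ _ _
        have e3 : ∑ m, ip ((c • Φ) m) (Etil m) = c * ∑ m, ip (Φ m) (Etil m) := by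
          rw [Finset.mul_sum]
          exact Finset.sum_congr rfl fun m _ => ip_smul_left _ _ _
        rw [e1, e2, e3] at h
        have e4 : c * δ = u + ip σ₀ χ₀ := div_mul_cancel₀ _ (ne_of_lt hneg)
        have e5 : c * ip (∑ m, Φ m) χ₀ + (c * (∑ m, ip (Φ m) (Etil m))) * s = c * δ := by
          rw [hδdef]; ring
        have h6 : u + ip σ₀ χ₀ < c * δ := by linarith
        rw [e4] at h6
        linarith
      have hsum : ∑ m, ip (Φ m) (χ - Etil m)
          = (-s)⁻¹ * ip (∑ m, Φ m) χ₀ - ∑ m, ip (Φ m) (Etil m) := by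
        have e1 : ∑ m, ip (Φ m) (χ - Etil m)
            = ∑ m, ip (Φ m) χ - ∑ m, ip (Φ m) (Etil m) := by
          rw [← Finset.sum_sub_distrib]
          exact Finset.sum_congr rfl fun m _ => ip_sub_right _ _ _
        have e2 : ∑ m, ip (Φ m) χ = ip (∑ m, Φ m) χ := (ip_sum_left _ _ _).symm
        have e3 : ip (∑ m, Φ m) χ = (-s)⁻¹ * ip (∑ m, Φ m) χ₀ := by
          rw [hχdef, ip_smul_right]
        rw [e1, e2, e3]
      rw [hsum]
      set a := ip (∑ m, Φ m) χ₀
      set v := ∑ m, ip (Φ m) (Etil m)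
      have h1 : (-s)⁻¹ * (a + v * s) = (-s)⁻¹ * a - v := by
        have hs1 : (-s)⁻¹ * s = -1 := by
          rw [inv_neg, neg_mul, inv_mul_cancel₀ hsne]
        calc (-s)⁻¹ * (a + v * s) = (-s)⁻¹ * a + v * ((-s)⁻¹ * s) := by ring
          _ = (-s)⁻¹ * a - v := by rw [hs1]; ring
      have h2 : 0 ≤ (-s)⁻¹ * (a + v * s) := mul_nonneg hsinv.le hδ
      rw [h1] at h2
      linarith
    -- bound on the dual objective
    have hDS : ∀ σ ∈ S, ip σ χ < p + ε := by
      intro σ hσ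
      have h1 : (p + ε) * s < - ip σ χ₀ := lt_trans hfpoint (hzeroS σ hσ)
      have h2 : ip σ χ = (-s)⁻¹ * ip σ χ₀ := by rw [hχdef, ip_smul_right]
      have h3 : ip σ χ₀ < (p + ε) * (-s) := by nlinarith
      have h4 : (-s)⁻¹ * ip σ χ₀ < (-s)⁻¹ * ((p + ε) * (-s)) :=
        mul_lt_mul_of_pos_left h3 hsinv
      have h5 : (-s)⁻¹ * ((p + ε) * (-s)) = p + ε := by
        field_simp
      rw [h2]
      rw [h5] at h4
      exact h4
    set d := sSup {t : ℝ | ∃ φ ∈ S, t = ip φ χ} with hddef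
    have hd_le : d ≤ p + ε := by
      refine csSup_le ⟨ip σ₀ χ, ⟨σ₀, hσ₀S, rfl⟩⟩ ?_
      rintro t ⟨φ, hφ, rfl⟩
      exact (hDS φ hφ).le
    exact ⟨d, ⟨χ, hχH, hdual, rfl⟩, hd_le⟩
  -- conclusion
  have hDne : D.Nonempty := by
    obtain ⟨d, hd, _⟩ := key 1 one_pos
    exact ⟨d, hd⟩
  have hDbdd : BddBelow D := by
    refine ⟨sSup P, fun d hd => ?_⟩
    exact csSup_le hPne fun r hr => hweak r hr d hd
  refine le_antisymm ?_ ?_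
  · exact le_csInf hDne fun d hd => csSup_le hPne fun r hr => hweak r hr d hd
  · apply le_of_forall_pos_le_add
    intro ε hε
    obtain ⟨d, hdD, hd⟩ := key ε hε
    exact le_trans (csInf_le hDbdd hdD) hd
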